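/- arXiv:1501.05998 — 2 statements merged into one kernel-verified Lean document; each statement's English description precedes it below -/
import Mathlib

section
/- Let b ≥ 2 and N ≥ 1 be integers. Then for all real numbers x and y, the generalized Sierpinski matrices satisfy S_{b,N}(x) · S_{b,N}(y) = S_{b,N}(x+y). -/
/-- The generalized binomial coefficient `binom(x,k) = x(x-1)⋯(x-k+1)/k!`. -/
noncomputable def binom (x : ℝ) (k : ℕ) : ℝ :=
  (∏ i ∈ Finset.range k, (x - i)) / (Nat.factorial k)

/-- The generalized Sierpinski matrix `S_{b,1}(x)`, with `(j,k)`-entry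
`binom(x+j-k-1, j-k)` for `k ≤ j` and `0` otherwise. -/
noncomputable def S1 (b : ℕ) (x : ℝ) : Matrix (Fin b) (Fin b) ℝ :=
  Matrix.of fun j k =>
    if (k : ℕ) ≤ (j : ℕ) then binom (x + ((j : ℕ) - (k : ℕ)) - 1) ((j : ℕ) - (k : ℕ)) else 0

/-- The equivalence `Fin b × Fin (b^N) ≃ Fin (b^(N+1))`, `(p, r) ↦ p·b^N + r`, used to index
Kronecker products. -/
def pke (b N : ℕ) : Fin b × Fin (b ^ N) ≃ Fin (b ^ (N + 1)) :=
  finProdFinEquiv.trans (finCongr (by ring))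

open Kronecker in
/-- The generalized Sierpinski matrices `S_{b,N}(x)`, defined recursively by
`S_{b,N+1}(x) = S_{b,1}(x) ⊗ S_{b,N}(x)` (Kronecker product). -/
noncomputable def Smat (b : ℕ) (x : ℝ) : (N : ℕ) → Matrix (Fin (b ^ N)) (Fin (b ^ N)) ℝ
  | 0 => 1
  | N + 1 => Matrix.reindex (pke b N) (pke b N) (S1 b x ⊗ₖ Smat b x N)

theorem prod_eq_smeval (x : ℝ) (k : ℕ) :
    (∏ i ∈ Finset.range k, (x - i)) = (descPochhammer ℤ k).smeval x := by
  induction k with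
  | zero => simp
  | succ k ih =>
    rw [Finset.prod_range_succ, ih, descPochhammer_succ_right, Polynomial.smeval_mul,
      Polynomial.smeval_sub, Polynomial.smeval_X, Polynomial.smeval_natCast]
    ring

theorem binom_eq_choose (x : ℝ) (k : ℕ) : binom x k = Ring.choose x k := by
  have h := Ring.descPochhammer_eq_factorial_smul_choose x k
  rw [nsmul_eq_mul] at h
  rw [binom, prod_eq_smeval, h]
  field_simp

theorem binom_vandermonde (u v : ℝ) (d : ℕ) :
    binom (u + v) d = ∑ ij ∈ Finset.HasAntidiagonal.antidiagonal d, binom u ij.1 * binom v ij.2 := by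
  simp only [binom_eq_choose]
  exact Ring.add_choose_eq d (Commute.all u v)

theorem binom_rise (x : ℝ) (n : ℕ) :
    binom (x + n - 1) n = (-1 : ℝ)^n * binom (-x) n := by
  unfold binom
  rw [← mul_div_assoc]
  congr 1
  have h1 : (∏ i ∈ Finset.range n, (x + n - 1 - i)) = ∏ i ∈ Finset.range n, (x + i) := by
    rw [← Finset.prod_range_reflect (fun j => x + j) n]
    refine Finset.prod_congr rfl fun i hi => ?_
    rw [Finset.mem_range] at hi
    have : ((n - 1 - i : ℕ) : ℝ) = (n : ℝ) - 1 - i := by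
      have h2 : i ≤ n - 1 := Nat.le_sub_one_of_lt hi
      rw [Nat.cast_sub h2, Nat.cast_sub (by omega : 1 ≤ n)]
      push_cast; ring
    rw [this]; ring
  rw [h1]
  calc ∏ i ∈ Finset.range n, (x + i)
      = ∏ i ∈ Finset.range n, ((-1 : ℝ) * (-x - i)) := by
        refine Finset.prod_congr rfl fun i _ => by ring
    _ = (-1 : ℝ)^n * ∏ i ∈ Finset.range n, (-x - i) := by
        rw [Finset.prod_mul_distrib, Finset.prod_const, Finset.card_range]

theorem binom_key (x y : ℝ) (d : ℕ) :
    ∑ ij ∈ Finset.HasAntidiagonal.antidiagonal d, binom (x + ij.1 - 1) ij.1 * binom (y + ij.2 - 1) ij.2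
      = binom (x + y + d - 1) d := by
  simp only [binom_rise]
  have hxy : -(x + y) = -x + -y := by ring
  rw [hxy, binom_vandermonde, Finset.mul_sum]
  refine Finset.sum_congr rfl fun ij hij => ?_
  rw [Finset.HasAntidiagonal.mem_antidiagonal] at hij
  rw [← hij, pow_add]
  ring

theorem S1_mul (b : ℕ) (x y : ℝ) : S1 b x * S1 b y = S1 b (x + y) := by
  ext j k
  rw [Matrix.mul_apply]
  simp only [S1, Matrix.of_apply]
  by_cases h : (k : ℕ) ≤ (j : ℕ)
  · rw [if_pos h, show ((j : ℕ) : ℝ) - ((k : ℕ) : ℝ) = (((j : ℕ) - (k : ℕ) : ℕ) : ℝ) from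
      (Nat.cast_sub h).symm, ← binom_key x y ((j : ℕ) - (k : ℕ))]
    rw [← Finset.sum_subset
      (Finset.filter_subset (fun m : Fin b => (k : ℕ) ≤ (m : ℕ) ∧ (m : ℕ) ≤ (j : ℕ)) Finset.univ)
      (fun m _ hm => by
        simp only [Finset.mem_filter, Finset.mem_univ, true_and, not_and, not_le] at hm
        by_cases h1 : (m : ℕ) ≤ (j : ℕ)
        · rw [if_neg fun h2 => absurd (hm h2) (not_lt.mpr h1), mul_zero]
        · rw [if_neg h1, zero_mul])]
    refine Finset.sum_nbij' (fun m => ((j : ℕ) - (m : ℕ), (m : ℕ) - (k : ℕ)))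
      (fun p => (⟨(j : ℕ) - p.1, lt_of_le_of_lt (Nat.sub_le _ _) j.isLt⟩ : Fin b))
      ?_ ?_ ?_ ?_ ?_
    · intro m hm
      simp only [Finset.mem_filter, Finset.mem_univ, true_and] at hm
      simp only [Finset.HasAntidiagonal.mem_antidiagonal]
      omega
    · intro p hp
      rw [Finset.HasAntidiagonal.mem_antidiagonal] at hp
      simp only [Finset.mem_filter, Finset.mem_univ, true_and]
      omega
    · intro m hm
      simp only [Finset.mem_filter, Finset.mem_univ, true_and] at hm
      apply Fin.ext
      simp only [Fin.val_mk]
      omega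
    · intro p hp
      rw [Finset.HasAntidiagonal.mem_antidiagonal] at hp
      apply Prod.ext <;> simp only [Fin.val_mk] <;> omega
    · intro m hm
      simp only [Finset.mem_filter, Finset.mem_univ, true_and] at hm
      rw [if_pos hm.2, if_pos hm.1, Nat.cast_sub hm.2, Nat.cast_sub hm.1]
  · rw [if_neg h]
    refine Finset.sum_eq_zero fun m _ => ?_
    by_cases h1 : (m : ℕ) ≤ (j : ℕ)
    · rw [if_neg (fun h2 => h (le_trans h2 h1)), mul_zero]
    · rw [if_neg h1, zero_mul]

open Kronecker in
theorem Smat_mul (b : ℕ) (x y : ℝ) (N : ℕ) :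
    Smat b x N * Smat b y N = Smat b (x + y) N := by
  induction N with
  | zero => show (1 : Matrix (Fin (b^0)) (Fin (b^0)) ℝ) * 1 = 1; rw [one_mul]
  | succ N ih =>
    show Matrix.reindex (pke b N) (pke b N) (S1 b x ⊗ₖ Smat b x N) *
        Matrix.reindex (pke b N) (pke b N) (S1 b y ⊗ₖ Smat b y N) =
        Matrix.reindex (pke b N) (pke b N) (S1 b (x + y) ⊗ₖ Smat b (x + y) N)
    simp only [Matrix.reindex_apply]
    rw [Matrix.submatrix_mul_equiv _ _ _ (pke b N).symm _, ← Matrix.mul_kronecker_mul,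
      S1_mul, ih]

/-- The generalized Sierpinski matrices form a one-parameter group:
`S_{b,N}(x) · S_{b,N}(y) = S_{b,N}(x+y)`. -/
theorem sierpinski_one_parameter_group (b N : ℕ) (hb : 2 ≤ b) (hN : 1 ≤ N) (x y : ℝ) :
    Smat b x N * Smat b y N = Smat b (x + y) N :=
  Smat_mul b x y N
end

section
/- Let A = (a_0, a_1, a_2) be a zero-sum vector of complex numbers, and let n be a non-negative integer whose base-3 expansion does not contain the digit 2. Then ∑_{k ⪯ n} a_{u_3(k)} = (-1)^{w(n)} · a_{u_3(2n)}, where the sum is over all non-negative integers k digitally dominated by n in base 3. -/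
/-- `dig b n i` is the `i`-th digit of `n` in base `b`. -/
def dig (b n i : ℕ) : ℕ := n / b ^ i % b

/-- `u3 n` is the sum of the base-`3` digits of `n`, reduced modulo `3`. -/
def u3 (n : ℕ) : Fin 3 := ⟨(Nat.digits 3 n).sum % 3, Nat.mod_lt _ (by norm_num)⟩

/-- `w n` is the sum of the base-`3` digits of `n`, reduced modulo `2`. -/
def w (n : ℕ) : ℕ := (Nat.digits 3 n).sum % 2

lemma dig_zero (k : ℕ) : dig 3 k 0 = k % 3 := by simp [dig]

lemma dig_succ (k i : ℕ) : dig 3 k (i+1) = dig 3 (k/3) i := by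
  simp [dig, pow_succ, Nat.div_div_eq_div_mul, mul_comm]

lemma dom_le : ∀ k n : ℕ, (∀ i, dig 3 k i ≤ dig 3 n i) → k ≤ n := by
  intro k
  induction k using Nat.strong_induction_on with
  | _ k ih =>
    intro n h
    rcases Nat.eq_zero_or_pos k with hk | hk
    · omega
    · have h0 := h 0
      rw [dig_zero, dig_zero] at h0
      have h1 : k / 3 ≤ n / 3 := by
        apply ih (k/3) (by omega)
        intro i
        have := h (i+1)
        rwa [dig_succ, dig_succ] at this
      omega

lemma sum_digits_three (q r : ℕ) (hr : r < 3) :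
    (Nat.digits 3 (3*q+r)).sum = (Nat.digits 3 q).sum + r := by
  rcases Nat.eq_zero_or_pos (3*q+r) with h | h
  · have hq : q = 0 := by omega
    have hr0 : r = 0 := by omega
    simp [hq, hr0]
  · rw [Nat.digits_def' (by norm_num : (1:ℕ) < 3) h]
    have h1 : (3*q+r) % 3 = r := by omega
    have h2 : (3*q+r) / 3 = q := by omega
    rw [h1, h2]
    simp [Nat.add_comm]

lemma sum_three_mul (g : ℕ → ℂ) (M : ℕ) : ∑ k ∈ Finset.range (3*M), g k
    = ∑ q ∈ Finset.range M, (g (3*q) + g (3*q+1) + g (3*q+2)) := by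
  induction M with
  | zero => simp
  | succ M ih =>
    have h : 3*(M+1) = 3*M + 1 + 1 + 1 := by ring
    rw [h, Finset.sum_range_succ, Finset.sum_range_succ, Finset.sum_range_succ,
      Finset.sum_range_succ, ih]
    ring

lemma dom_iff (q r m d : ℕ) (hr : r < 3) (hd : d < 3) :
    (∀ i, dig 3 (3*q+r) i ≤ dig 3 (3*m+d) i) ↔ (r ≤ d ∧ ∀ i, dig 3 q i ≤ dig 3 m i) := by
  have hq3 : (3*q+r)/3 = q := by omega
  have hm3 : (3*m+d)/3 = m := by omega
  constructor
  · intro h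
    refine ⟨?_, fun i => ?_⟩
    · have := h 0; rw [dig_zero, dig_zero] at this; omega
    · have := h (i+1); rwa [dig_succ, dig_succ, hq3, hm3] at this
  · rintro ⟨h1, h2⟩ i
    cases i with
    | zero => rw [dig_zero, dig_zero]; omega
    | succ i => rw [dig_succ, dig_succ, hq3, hm3]; exact h2 i

open Classical in
lemma key (A : ℕ → ℂ) (hsum : ∀ j, A j + A (j+1) = -A (j+2)) :
    ∀ n : ℕ, (∀ i, dig 3 n i ≠ 2) → ∀ c : ℕ,
    ∑ k ∈ (Finset.range (n + 1)).filter (fun k => ∀ i, dig 3 k i ≤ dig 3 n i),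
        A ((Nat.digits 3 k).sum + c)
      = (-1 : ℂ) ^ n * A ((Nat.digits 3 (2*n)).sum + c) := by
  intro n
  induction n using Nat.strong_induction_on with
  | _ n ih =>
    intro hn c
    rcases Nat.eq_zero_or_pos n with h0 | hpos
    · subst h0
      have hf : ((Finset.range 1).filter fun k => ∀ i, dig 3 k i ≤ dig 3 0 i) = {0} := by
        ext k
        simp only [Finset.mem_filter, Finset.mem_range, Finset.mem_singleton, Nat.lt_one_iff]
        constructor
        · tauto
        · rintro rfl; exact ⟨rfl, fun i => le_refl _⟩
      rw [hf, Finset.sum_singleton]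
      simp
    · set m := n / 3 with hm
      have hd : n % 3 ≠ 2 := by have := hn 0; rwa [dig_zero] at this
      have hmlt : m < n := Nat.div_lt_self hpos (by norm_num)
      have hmd : ∀ i, dig 3 m i ≠ 2 := fun i => by
        have := hn (i+1); rwa [dig_succ] at this
      have hcase : n = 3*m ∨ n = 3*m+1 := by omega
      rw [Finset.sum_filter]
      have hzero : ∀ k ∈ Finset.range (3*(m+1)), k ∉ Finset.range (n+1) →
          (if ∀ i, dig 3 k i ≤ dig 3 n i then A ((Nat.digits 3 k).sum + c) else 0) = 0 := by
        intro k _ hk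
        rw [if_neg]
        intro hP
        have := dom_le k n hP
        simp only [Finset.mem_range] at hk
        omega
      rw [Finset.sum_subset (Finset.range_subset_range.mpr (by omega : n + 1 ≤ 3*(m+1))) hzero]
      rw [sum_three_mul]
      rcases hcase with hc | hc
      · -- n = 3*m
        have hterm : ∀ q ∈ Finset.range (m+1),
            ((if ∀ i, dig 3 (3*q) i ≤ dig 3 n i then A ((Nat.digits 3 (3*q)).sum + c) else 0)
            + (if ∀ i, dig 3 (3*q+1) i ≤ dig 3 n i then A ((Nat.digits 3 (3*q+1)).sum + c) else 0)
            + (if ∀ i, dig 3 (3*q+2) i ≤ dig 3 n i then A ((Nat.digits 3 (3*q+2)).sum + c) else 0))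
            = if ∀ i, dig 3 q i ≤ dig 3 m i then A ((Nat.digits 3 q).sum + c) else 0 := by
          intro q _
          have e0 : (∀ i, dig 3 (3*q) i ≤ dig 3 n i) ↔ (∀ i, dig 3 q i ≤ dig 3 m i) := by
            rw [hc]
            have := dom_iff q 0 m 0 (by norm_num) (by norm_num)
            simpa using this
          have e1 : ¬ (∀ i, dig 3 (3*q+1) i ≤ dig 3 n i) := by
            rw [hc]
            have := dom_iff q 1 m 0 (by norm_num) (by norm_num)
            simp only [Nat.mul_add, add_zero] at this
            simpa using this
          have e2 : ¬ (∀ i, dig 3 (3*q+2) i ≤ dig 3 n i) := by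
            rw [hc]
            have := dom_iff q 2 m 0 (by norm_num) (by norm_num)
            simpa using this
          have es : (Nat.digits 3 (3*q)).sum = (Nat.digits 3 q).sum := by
            simpa using sum_digits_three q 0 (by norm_num)
          rw [if_neg e1, if_neg e2, if_congr e0 rfl rfl, es]
          ring
        rw [Finset.sum_congr rfl hterm, ← Finset.sum_filter, ih m hmlt hmd c]
        have h2n : (Nat.digits 3 (2*n)).sum = (Nat.digits 3 (2*m)).sum := by
          rw [hc]
          have : 2*(3*m) = 3*(2*m) := by ring
          rw [this]
          simpa using sum_digits_three (2*m) 0 (by norm_num)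
        rw [h2n, hc, pow_mul]
        norm_num
      · -- n = 3*m+1
        have hterm : ∀ q ∈ Finset.range (m+1),
            ((if ∀ i, dig 3 (3*q) i ≤ dig 3 n i then A ((Nat.digits 3 (3*q)).sum + c) else 0)
            + (if ∀ i, dig 3 (3*q+1) i ≤ dig 3 n i then A ((Nat.digits 3 (3*q+1)).sum + c) else 0)
            + (if ∀ i, dig 3 (3*q+2) i ≤ dig 3 n i then A ((Nat.digits 3 (3*q+2)).sum + c) else 0))
            = if ∀ i, dig 3 q i ≤ dig 3 m i then -A ((Nat.digits 3 q).sum + (c+2)) else 0 := by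
          intro q _
          have e0 : (∀ i, dig 3 (3*q) i ≤ dig 3 n i) ↔ (∀ i, dig 3 q i ≤ dig 3 m i) := by
            rw [hc]
            have := dom_iff q 0 m 1 (by norm_num) (by norm_num)
            simpa using this
          have e1 : (∀ i, dig 3 (3*q+1) i ≤ dig 3 n i) ↔ (∀ i, dig 3 q i ≤ dig 3 m i) := by
            rw [hc]
            have := dom_iff q 1 m 1 (by norm_num) (by norm_num)
            simpa using this
          have e2 : ¬ (∀ i, dig 3 (3*q+2) i ≤ dig 3 n i) := by
            rw [hc]
            have := dom_iff q 2 m 1 (by norm_num) (by norm_num)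
            simpa using this
          have es0 : (Nat.digits 3 (3*q)).sum = (Nat.digits 3 q).sum := by
            simpa using sum_digits_three q 0 (by norm_num)
          have es1 : (Nat.digits 3 (3*q+1)).sum = (Nat.digits 3 q).sum + 1 :=
            sum_digits_three q 1 (by norm_num)
          rw [if_neg e2, if_congr e0 rfl rfl, if_congr e1 rfl rfl, es0, es1]
          by_cases hq : ∀ i, dig 3 q i ≤ dig 3 m i
          · rw [if_pos hq, if_pos hq, if_pos hq]
            have := hsum ((Nat.digits 3 q).sum + c)
            have ea : (Nat.digits 3 q).sum + 1 + c = (Nat.digits 3 q).sum + c + 1 := by omega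
            have eb : (Nat.digits 3 q).sum + (c+2) = (Nat.digits 3 q).sum + c + 2 := by omega
            rw [ea, eb]
            linear_combination this
          · rw [if_neg hq, if_neg hq, if_neg hq]; ring
        rw [Finset.sum_congr rfl hterm]
        have hneg : ∑ q ∈ Finset.range (m+1),
            (if ∀ i, dig 3 q i ≤ dig 3 m i then -A ((Nat.digits 3 q).sum + (c+2)) else 0)
            = -∑ q ∈ Finset.range (m+1),
            (if ∀ i, dig 3 q i ≤ dig 3 m i then A ((Nat.digits 3 q).sum + (c+2)) else 0) := by
          rw [← Finset.sum_neg_distrib]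
          apply Finset.sum_congr rfl
          intro q _
          split_ifs <;> simp
        rw [hneg, ← Finset.sum_filter, ih m hmlt hmd (c+2)]
        have h2n : (Nat.digits 3 (2*n)).sum = (Nat.digits 3 (2*m)).sum + 2 := by
          rw [hc]
          have : 2*(3*m+1) = 3*(2*m)+2 := by ring
          rw [this]
          exact sum_digits_three (2*m) 2 (by norm_num)
        have hargs : (Nat.digits 3 (2*m)).sum + (c+2) = (Nat.digits 3 (2*m)).sum + 2 + c := by
          omega
        rw [h2n, hc, hargs, pow_succ, pow_mul]
        norm_num

/-- Reduce a function on `Fin 3` to a function on `ℕ` via mod 3. -/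
def Aof (a : Fin 3 → ℂ) : ℕ → ℂ := fun j => a ⟨j % 3, by omega⟩

lemma Aof_sum (a : Fin 3 → ℂ) (ha : a 0 + a 1 + a 2 = 0) :
    ∀ j, Aof a j + Aof a (j+1) = -Aof a (j+2) := by
  intro j
  unfold Aof
  have h : j % 3 = 0 ∨ j % 3 = 1 ∨ j % 3 = 2 := by omega
  rcases h with h | h | h
  · have h1 : (j+1) % 3 = 1 := by omega
    have h2 : (j+2) % 3 = 2 := by omega
    simp only [h, h1, h2]
    show a 0 + a 1 = -a 2
    linear_combination ha
  · have h1 : (j+1) % 3 = 2 := by omega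
    have h2 : (j+2) % 3 = 0 := by omega
    simp only [h, h1, h2]
    show a 1 + a 2 = -a 0
    linear_combination ha
  · have h1 : (j+1) % 3 = 0 := by omega
    have h2 : (j+2) % 3 = 1 := by omega
    simp only [h, h1, h2]
    show a 2 + a 0 = -a 1
    linear_combination ha

open Classical in
/-- Let `A = (a_0, a_1, a_2)` be a zero-sum vector of complex numbers and let `n` be a
non-negative integer whose base-3 expansion does not contain the digit `2`. Then
`∑_{k ⪯ n} a_{u_3(k)} = (-1)^{w(n)} · a_{u_3(2n)}`, the sum over all `k` digitally dominated
by `n` in base 3. -/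
theorem ptm_coefficient_base_three (a : Fin 3 → ℂ) (ha : a 0 + a 1 + a 2 = 0)
    (n : ℕ) (hn : ∀ i, dig 3 n i ≠ 2) :
    ∑ k ∈ (Finset.range (n + 1)).filter (fun k => ∀ i, dig 3 k i ≤ dig 3 n i), a (u3 k) =
      (-1 : ℂ) ^ w n * a (u3 (2 * n)) := by
  have hkey := key (Aof a) (Aof_sum a ha) n hn 0
  have h1 : ∑ k ∈ (Finset.range (n + 1)).filter (fun k => ∀ i, dig 3 k i ≤ dig 3 n i), a (u3 k)
      = ∑ k ∈ (Finset.range (n + 1)).filter (fun k => ∀ i, dig 3 k i ≤ dig 3 n i),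
        Aof a ((Nat.digits 3 k).sum + 0) :=
    Finset.sum_congr rfl (fun k _ => rfl)
  rw [h1, hkey]
  have h2 : Aof a ((Nat.digits 3 (2*n)).sum + 0) = a (u3 (2*n)) := rfl
  rw [h2]
  have hw : w n = n % 2 := (Nat.modEq_digits_sum 2 3 (by norm_num) n).symm
  have hpow : ((-1:ℂ)) ^ (n % 2) = (-1:ℂ) ^ n := by
    conv_rhs => rw [← Nat.div_add_mod n 2]
    rw [pow_add, pow_mul]
    norm_num
  rw [hw, hpow]
end
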